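/- The matrix C satisfies: (1) the positive vector v with components v i = 1 − b i lies in the left kernel of C, i.e. Cᵀ.mulVec v = 0 (equivalently vᵀ C = 0), so 0 is an eigenvalue of C; (2) every diagonal entry satisfies C i i ≥ 0; and (3) every off-diagonal entry satisfies C i j ≤ 0 for i ≠ j. -/

import Mathlib

open Matrix

/-- Auxiliary: entries of the nonsingular inverse of `1 - K` are nonnegative when `K` is
entrywise nonnegative with all row sums of absolute values less than `1`. -/
lemma aux_inv_one_sub_nonneg {n : ℕ} (K : Matrix (Fin n) (Fin n) ℝ)
    (hKnn : ∀ i j, 0 ≤ K i j)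
    (hKnorm : ∀ i, ∑ j, |K i j| < 1) :
    ∀ i j, 0 ≤ (1 - K)⁻¹ i j := by
  letI : NormedRing (Matrix (Fin n) (Fin n) ℝ) := Matrix.linftyOpNormedRing
  letI : NormedAlgebra ℝ (Matrix (Fin n) (Fin n) ℝ) := Matrix.linftyOpNormedAlgebra
  haveI : CompleteSpace (Matrix (Fin n) (Fin n) ℝ) :=
    FiniteDimensional.complete ℝ (Matrix (Fin n) (Fin n) ℝ)
  have hnorm : ‖K‖ < 1 := by
    rw [Matrix.linfty_opNorm_def]
    have h : ((Finset.univ : Finset (Fin n)).sup fun i => ∑ j, ‖K i j‖₊) < 1 := by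
      rw [Finset.sup_lt_iff (by norm_num : (⊥ : NNReal) < 1)]
      intro i _
      rw [← NNReal.coe_lt_coe]
      push_cast
      simpa [Real.norm_eq_abs] using hKnorm i
    exact_mod_cast h
  have hpow : ∀ m i j, 0 ≤ (K ^ m) i j := by
    intro m
    induction m with
    | zero =>
      intro i j
      simp only [pow_zero]
      rw [Matrix.one_apply]
      positivity
    | succ m ih =>
      intro i j
      rw [pow_succ, Matrix.mul_apply]
      exact Finset.sum_nonneg fun k _ => mul_nonneg (ih i k) (hKnn k j)
  have hP : HasSum (fun m : ℕ => K ^ m) (Ring.inverse (1 - K)) :=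
    hasSum_geom_series_inverse K hnorm
  intro i j
  rw [Matrix.nonsing_inv_eq_ringInverse]
  let e : Matrix (Fin n) (Fin n) ℝ →ₗ[ℝ] ℝ :=
    { toFun := fun M => M i j, map_add' := fun _ _ => rfl, map_smul' := fun _ _ => rfl }
  let e' : Matrix (Fin n) (Fin n) ℝ →L[ℝ] ℝ := LinearMap.toContinuousLinearMap e
  have hPij : HasSum (fun m : ℕ => (K ^ m) i j) (Ring.inverse (1 - K) i j) := hP.mapL e'
  exact hasSum_le (fun m => hpow m i j) hasSum_zero hPij

/-- The matrix `C = I − Aᵀ − Rᵀ` satisfies: (1) the positive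
vector `v` with components `v i = 1 − b i` lies in the left kernel of `C`, i.e.
`Cᵀ.mulVec v = 0` (equivalently `vᵀ C = 0`), so `0` is an eigenvalue of `C`;
(2) every diagonal entry satisfies `C i i ≥ 0`; and (3) every off-diagonal
entry satisfies `C i j ≤ 0` for `i ≠ j`. -/
theorem stmt_13 (n : ℕ) (hn : 1 ≤ n)
    (F : Matrix (Fin n) (Fin n) ℝ)
    (hFnonneg : ∀ i j, 0 ≤ F i j)
    (hFrow : ∀ i, ∑ j, F i j = 1)
    (b : Fin n → ℝ) (hb0 : ∀ j, 0 ≤ b j) (hb1 : ∀ j, b j < 1)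
    (K : Matrix (Fin n) (Fin n) ℝ)
    (hK : ∀ i j, K i j = F i j * b j)
    (hInv : IsUnit (1 - K))
    (S : Matrix (Fin n) (Fin n) ℝ)
    (hS : S = (1 - K)⁻¹ * F)
    (A R : Matrix (Fin n) (Fin n) ℝ)
    (hA : ∀ i j, A i j = (1 - b i) * S i j * (1 - b j))
    (hR : ∀ i j, R i j = (1 - b i) * S i j * b j)
    (C : Matrix (Fin n) (Fin n) ℝ)
    (hC : C = 1 - A.transpose - R.transpose) :
    ((∀ i, 0 < 1 - b i) ∧
      C.transpose.mulVec (fun i => 1 - b i) = 0 ∧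
      Matrix.vecMul (fun i => 1 - b i) C = 0 ∧
      (0 : ℝ) ∈ spectrum ℝ C) ∧
    (∀ i, 0 ≤ C i i) ∧
    (∀ i j, i ≠ j → C i j ≤ 0) := by
  have i0 : Fin n := ⟨0, hn⟩
  have hbv : ∀ i, 0 < 1 - b i := fun i => by linarith [hb1 i]
  have hdet : IsUnit (1 - K).det := (Matrix.isUnit_iff_isUnit_det _).mp hInv
  -- nonnegativity of S
  have hKnn : ∀ i j, 0 ≤ K i j := fun i j => by
    rw [hK]; exact mul_nonneg (hFnonneg i j) (hb0 j)
  have hKnorm : ∀ i, ∑ j, |K i j| < 1 := by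
    intro i
    obtain ⟨j0, -, hj0⟩ := Finset.exists_max_image (Finset.univ : Finset (Fin n)) b
      ⟨i0, Finset.mem_univ i0⟩
    calc ∑ j, |K i j| = ∑ j, F i j * b j := by
          refine Finset.sum_congr rfl fun j _ => ?_
          rw [hK, abs_of_nonneg (mul_nonneg (hFnonneg i j) (hb0 j))]
      _ ≤ ∑ j, F i j * b j0 := by
          refine Finset.sum_le_sum fun j _ => ?_
          exact mul_le_mul_of_nonneg_left (hj0 j (Finset.mem_univ j)) (hFnonneg i j)
      _ = b j0 := by rw [← Finset.sum_mul, hFrow i, one_mul]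
      _ < 1 := hb1 j0
  have hInvnn := aux_inv_one_sub_nonneg K hKnn hKnorm
  have hSnn : ∀ i j, 0 ≤ S i j := by
    intro i j
    rw [hS, Matrix.mul_apply]
    exact Finset.sum_nonneg fun k _ => mul_nonneg (hInvnn i k) (hFnonneg k j)
  -- row identity : S *ᵥ (1 - b) = 1
  have hFv : F.mulVec (fun k => 1 - b k) = (1 - K).mulVec (fun _ => 1) := by
    funext i
    simp only [Matrix.mulVec, dotProduct, Matrix.sub_apply, Matrix.one_apply, mul_one,
      mul_sub, Finset.sum_sub_distrib]
    congr 1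
    · rw [hFrow i]
      simp
    · exact Finset.sum_congr rfl fun j _ => (hK i j).symm
  have hSv : S.mulVec (fun k => 1 - b k) = fun _ => 1 := by
    rw [hS, ← Matrix.mulVec_mulVec, hFv, Matrix.mulVec_mulVec,
      Matrix.nonsing_inv_mul _ hdet, Matrix.one_mulVec]
  have hSrow : ∀ i, ∑ k, S i k * (1 - b k) = 1 := by
    intro i
    simpa [Matrix.mulVec, dotProduct] using congrFun hSv i
  -- entrywise formula for C
  have hCij : ∀ i j, C i j = (if i = j then 1 else 0) - (1 - b j) * S j i := by
    intro i j
    rw [hC]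
    simp only [Matrix.sub_apply, Matrix.transpose_apply, Matrix.one_apply, hA, hR]
    ring
  -- left kernel
  have hvC : Matrix.vecMul (fun i => 1 - b i) C = 0 := by
    funext j
    have key : ∀ i, (1 - b i) * C i j
        = (if i = j then 1 - b j else 0) - (1 - b j) * (S j i * (1 - b i)) := by
      intro i
      rw [hCij i j]
      by_cases h : i = j
      · subst h; simp; ring
      · simp only [if_neg h]; ring
    simp only [Matrix.vecMul, dotProduct, key, Finset.sum_sub_distrib, Pi.zero_apply]
    rw [Finset.sum_ite_eq' Finset.univ j (fun _ => 1 - b j), ← Finset.mul_sum, hSrow j]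
    simp
  have hCt : C.transpose.mulVec (fun i => 1 - b i) = 0 := by
    rw [Matrix.mulVec_transpose, hvC]
  have hspec : (0 : ℝ) ∈ spectrum ℝ C := by
    rw [spectrum.zero_mem_iff]
    intro hU
    have hdetC := (Matrix.isUnit_iff_isUnit_det C).mp hU
    have hv0 : (fun i => 1 - b i) = (0 : Fin n → ℝ) := by
      calc (fun i => 1 - b i)
          = Matrix.vecMul (fun i => 1 - b i) (C * C⁻¹) := by
            rw [Matrix.mul_nonsing_inv C hdetC, Matrix.vecMul_one]
        _ = Matrix.vecMul (Matrix.vecMul (fun i => 1 - b i) C) C⁻¹ :=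
            (Matrix.vecMul_vecMul _ _ _).symm
        _ = Matrix.vecMul 0 C⁻¹ := by rw [hvC]
        _ = 0 := Matrix.zero_vecMul _
    have h := congrFun hv0 i0
    simp only [Pi.zero_apply] at h
    linarith [hb1 i0]
  have hdiag : ∀ i, 0 ≤ C i i := by
    intro i
    rw [hCij i i, if_pos rfl]
    have h1 : S i i * (1 - b i) ≤ ∑ k, S i k * (1 - b k) :=
      Finset.single_le_sum
        (fun k _ => mul_nonneg (hSnn i k) (le_of_lt (hbv k))) (Finset.mem_univ i)
    rw [hSrow i] at h1
    nlinarith [h1]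
  refine ⟨⟨hbv, hCt, hvC, hspec⟩, hdiag, ?_⟩
  intro i j hij
  rw [hCij i j, if_neg hij]
  have h2 : 0 ≤ (1 - b j) * S j i := mul_nonneg (le_of_lt (hbv j)) (hSnn j i)
  linarith
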